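/- (Theorem 2, sufficient condition, Ψ⁺ branch) Let B be a real n×m matrix, C a real m×n matrix, and let 𝒟 = {Δ ∈ ℝ^m : Δⱼ⁻ ≤ Δⱼ ≤ Δⱼ⁺ for all j} with 0 ≤ Δⱼ⁻ ≤ Δⱼ⁺. Let J₂, J₄ be real symmetric n×n matrices with J₄ negative semidefinite and J₂ + κ̄² J₄ negative definite for some κ̄ > 0. Write J(Δ,κ) = B·diag(Δ)·C + κ² J₂ + κ⁴ J₄. Assume that for every Δ ∈ 𝒟, the characteristic polynomial of B·diag(Δ)·C has 0 as a root of multiplicity exactly one and all its other complex roots have negative real part. If there exists Δ* ∈ 𝒟 such that the function κ ↦ det(−J(Δ*,κ)) is initially positive (Ψ⁺ initially positive), and there exists κ₂ > 0 such that det(−J(Δ,κ₂)) < 0 for all Δ ∈ 𝒟 (Ψ⁺ has a negative sign change), then Δ* exhibits microphase separation. -/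

import Mathlib

open Matrix Polynomial

/-- The combined Jacobian `J(Δ,κ) = B ⬝ diag(Δ) ⬝ C + κ² J₂ + κ⁴ J₄`. -/
noncomputable def Jmat {n m : ℕ} (B : Matrix (Fin n) (Fin m) ℝ) (C : Matrix (Fin m) (Fin n) ℝ)
    (J2 J4 : Matrix (Fin n) (Fin n) ℝ) (Δ : Fin m → ℝ) (κ : ℝ) : Matrix (Fin n) (Fin n) ℝ :=
  B * Matrix.diagonal Δ * C + κ ^ 2 • J2 + κ ^ 4 • J4

/-- Every eigenvalue of the real matrix `M` (root in `ℂ` of its characteristic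
polynomial) has negative real part. -/
def AllEigNegRe {n : ℕ} (M : Matrix (Fin n) (Fin n) ℝ) : Prop :=
  ∀ μ : ℂ, ((M.charpoly).map (algebraMap ℝ ℂ)).IsRoot μ → μ.re < 0

/-- Some eigenvalue of the real matrix `M` has positive real part. -/
def SomeEigPosRe {n : ℕ} (M : Matrix (Fin n) (Fin n) ℝ) : Prop :=
  ∃ μ : ℂ, ((M.charpoly).map (algebraMap ℝ ℂ)).IsRoot μ ∧ 0 < μ.re

/-- The parameter `Δ` exhibits microphase separation: there exist
`0 < κ̂ < κ₁ < κ₂` such that all eigenvalues of `J(Δ,κ)` have negative real part for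
`κ ∈ (0,κ̂)`, some eigenvalue of `J(Δ,κ₁)` has positive real part, and all eigenvalues
of `J(Δ,κ₂)` have negative real part. -/
def Microphase {n m : ℕ} (B : Matrix (Fin n) (Fin m) ℝ) (C : Matrix (Fin m) (Fin n) ℝ)
    (J2 J4 : Matrix (Fin n) (Fin n) ℝ) (Δ : Fin m → ℝ) : Prop :=
  ∃ κhat κ1 κ2 : ℝ, 0 < κhat ∧ κhat < κ1 ∧ κ1 < κ2 ∧
    (∀ κ : ℝ, 0 < κ → κ < κhat → AllEigNegRe (Jmat B C J2 J4 Δ κ)) ∧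
    SomeEigPosRe (Jmat B C J2 J4 Δ κ1) ∧
    AllEigNegRe (Jmat B C J2 J4 Δ κ2)

section AuxLemmas
open Finset


lemma my_eval_charpoly {R : Type*} [CommRing R] {n : ℕ} (M : Matrix (Fin n) (Fin n) R) (t : R) :
    M.charpoly.eval t = (t • (1 : Matrix (Fin n) (Fin n) R) - M).det := by
  rw [Matrix.charpoly, ← coe_evalRingHom, RingHom.map_det]
  congr 1
  ext i j
  by_cases h : i = j
  · subst h
    simp [Matrix.charmatrix_apply_eq, Matrix.one_apply, Matrix.smul_apply]
  · simp [Matrix.charmatrix_apply_ne _ _ _ h, Matrix.one_apply, h, Matrix.smul_apply]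

lemma coeff_charpoly_continuous {n : ℕ} {J : ℝ → Matrix (Fin n) (Fin n) ℝ}
    (hJ : Continuous J) (k : ℕ) :
    Continuous fun κ => (J κ).charpoly.coeff k := by
  by_cases hk : k < n + 1
  · -- Vandermonde trick
    set V : Matrix (Fin (n+1)) (Fin (n+1)) ℝ :=
      Matrix.vandermonde (fun j : Fin (n+1) => (j : ℝ)) with hV
    have hdet : IsUnit V.det := by
      rw [hV, Matrix.det_vandermonde]
      refine (Finset.prod_ne_zero_iff.mpr fun i _ => Finset.prod_ne_zero_iff.mpr
        fun j hj => ?_).isUnit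
      have : i < j := Finset.mem_Ioi.mp hj
      have : (i : ℝ) < (j : ℝ) := by exact_mod_cast this
      linarith
    have key : ∀ κ, (fun i : Fin (n+1) => (J κ).charpoly.coeff i)
        = V⁻¹ *ᵥ (fun j : Fin (n+1) => ((j : ℝ) • (1 : Matrix (Fin n) (Fin n) ℝ) - J κ).det) := by
      intro κ
      have hnd : (J κ).charpoly.natDegree < n + 1 := by
        rw [Matrix.charpoly_natDegree_eq_dim]
        simp
      have hmv : V *ᵥ (fun i : Fin (n+1) => (J κ).charpoly.coeff i)
          = fun j : Fin (n+1) => ((j : ℝ) • (1 : Matrix (Fin n) (Fin n) ℝ) - J κ).det := by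
        funext j
        rw [← my_eval_charpoly]
        rw [Polynomial.eval_eq_sum_range' hnd]
        rw [Matrix.mulVec, dotProduct]
        rw [Finset.sum_range fun i => (J κ).charpoly.coeff i * (j : ℝ) ^ i]
        simp [hV, Matrix.vandermonde, mul_comm]
      rw [← hmv, Matrix.mulVec_mulVec, Matrix.nonsing_inv_mul _ hdet, Matrix.one_mulVec]
    have : Continuous fun κ => (V⁻¹ *ᵥ (fun j : Fin (n+1) =>
        ((j : ℝ) • (1 : Matrix (Fin n) (Fin n) ℝ) - J κ).det)) ⟨k, hk⟩ := by
      simp only [Matrix.mulVec, dotProduct]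
      refine continuous_finset_sum _ fun j _ => Continuous.mul continuous_const ?_
      exact Continuous.matrix_det (Continuous.sub continuous_const hJ)
    convert this using 2 with κ
    have := congrFun (key κ) ⟨k, hk⟩
    simpa using this
  · have hc : ∀ κ, (J κ).charpoly.coeff k = 0 := by
      intro κ
      apply Polynomial.coeff_eq_zero_of_natDegree_lt
      rw [Matrix.charpoly_natDegree_eq_dim]
      simpa using Nat.lt_of_succ_le (not_lt.mp hk)
    simpa [hc] using continuous_const

lemma exists_eigenvector {n : ℕ} (M : Matrix (Fin n) (Fin n) ℝ) (μ : ℂ)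
    (h : ((M.charpoly).map (algebraMap ℝ ℂ)).IsRoot μ) :
    ∃ v : Fin n → ℂ, v ≠ 0 ∧ (M.map (algebraMap ℝ ℂ)) *ᵥ v = μ • v := by
  have h1 : (μ • (1 : Matrix (Fin n) (Fin n) ℂ) - M.map (algebraMap ℝ ℂ)).det = 0 := by
    rw [← my_eval_charpoly, Matrix.charpoly_map]
    exact h
  obtain ⟨v, hv0, hv⟩ := (Matrix.exists_mulVec_eq_zero_iff).mpr h1
  refine ⟨v, hv0, ?_⟩
  have := hv
  rw [Matrix.sub_mulVec, Matrix.smul_mulVec, Matrix.one_mulVec, sub_eq_zero] at this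
  exact this.symm

lemma eigen_re_eq {n : ℕ} (M : Matrix (Fin n) (Fin n) ℝ) (μ : ℂ) (v : Fin n → ℂ)
    (hv : (M.map (algebraMap ℝ ℂ)) *ᵥ v = μ • v) :
    (fun i => (v i).re) ⬝ᵥ M *ᵥ (fun i => (v i).re)
      + (fun i => (v i).im) ⬝ᵥ M *ᵥ (fun i => (v i).im)
    = μ.re * (∑ i, ((v i).re ^ 2 + (v i).im ^ 2)) := by
  set x : Fin n → ℝ := fun i => (v i).re
  set y : Fin n → ℝ := fun i => (v i).im
  have hre : ∀ i, (M *ᵥ x) i = μ.re * x i - μ.im * y i := by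
    intro i
    have h1 := congrFun hv i
    simp only [Matrix.mulVec, dotProduct, Pi.smul_apply, Matrix.map_apply] at h1
    have h2 := congrArg Complex.re h1
    simp only [Complex.re_sum, Complex.mul_re, Complex.smul_re] at h2
    simpa [x, y, Matrix.mulVec, dotProduct, Complex.mul_re] using h2
  have him : ∀ i, (M *ᵥ y) i = μ.im * x i + μ.re * y i := by
    intro i
    have h1 := congrFun hv i
    simp only [Matrix.mulVec, dotProduct, Pi.smul_apply, Matrix.map_apply] at h1
    have h2 := congrArg Complex.im h1
    have h3 : ∑ x_1 : Fin n, M i x_1 * (v x_1).im = μ.re * (v i).im + μ.im * (v i).re := by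
      simpa [x, y, Matrix.mulVec, dotProduct, Complex.mul_im] using h2
    simp only [x, y, Matrix.mulVec, dotProduct]
    rw [h3]; ring
  have : x ⬝ᵥ M *ᵥ x + y ⬝ᵥ M *ᵥ y
      = ∑ i, (x i * (μ.re * x i - μ.im * y i) + y i * (μ.im * x i + μ.re * y i)) := by
    rw [dotProduct, dotProduct, ← Finset.sum_add_distrib]
    congr 1
    funext i
    rw [hre i, him i]
  rw [this, Finset.mul_sum]
  congr 1
  funext i
  ring

lemma eigen_abs_le {n : ℕ} (M : Matrix (Fin n) (Fin n) ℝ) (μ : ℂ)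
    (h : ((M.charpoly).map (algebraMap ℝ ℂ)).IsRoot μ) (hn : 0 < n) :
    ‖μ‖ ≤ ∑ i, ∑ j, |M i j| := by
  obtain ⟨v, hv0, hv⟩ := exists_eigenvector M μ h
  haveI : Nonempty (Fin n) := ⟨⟨0, hn⟩⟩
  obtain ⟨i₀, -, hi₀⟩ := Finset.exists_max_image Finset.univ (fun i => ‖v i‖)
    ⟨⟨0, hn⟩, Finset.mem_univ _⟩
  have hvi₀ : 0 < ‖v i₀‖ := by
    obtain ⟨i, hi⟩ := Function.ne_iff.mp hv0
    calc (0 : ℝ) < ‖v i‖ := by simpa using hi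
    _ ≤ ‖v i₀‖ := hi₀ i (Finset.mem_univ i)
  have key : ‖μ‖ * ‖v i₀‖ ≤ (∑ j, |M i₀ j|) * ‖v i₀‖ := by
    have h1 : μ * v i₀ = ∑ j, (M i₀ j : ℂ) * v j := by
      have := congrFun hv i₀
      simp only [Matrix.mulVec, dotProduct, Pi.smul_apply, Matrix.map_apply,
        smul_eq_mul] at this
      rw [← this]
      simp [Algebra.algebraMap_self]
    calc ‖μ‖ * ‖v i₀‖ = ‖μ * v i₀‖ := (norm_mul _ _).symm
    _ = ‖∑ j, (M i₀ j : ℂ) * v j‖ := by rw [h1]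
    _ ≤ ∑ j, ‖(M i₀ j : ℂ) * v j‖ := norm_sum_le _ _
    _ ≤ ∑ j, |M i₀ j| * ‖v i₀‖ := by
        refine Finset.sum_le_sum fun j _ => ?_
        rw [norm_mul, Complex.norm_real, Real.norm_eq_abs]
        exact mul_le_mul_of_nonneg_left (hi₀ j (Finset.mem_univ j)) (abs_nonneg _)
    _ = (∑ j, |M i₀ j|) * ‖v i₀‖ := (Finset.sum_mul _ _ _).symm
  have h2 : ‖μ‖ ≤ ∑ j, |M i₀ j| := le_of_mul_le_mul_right key hvi₀
  refine h2.trans ?_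
  exact Finset.single_le_sum (f := fun i => ∑ j, |M i j|)
    (fun i _ => Finset.sum_nonneg fun j _ => abs_nonneg _) (Finset.mem_univ i₀)

lemma quad_continuous {n : ℕ} (M : Matrix (Fin n) (Fin n) ℝ) :
    Continuous fun x : Fin n → ℝ => x ⬝ᵥ M *ᵥ x := by
  simp only [dotProduct, Matrix.mulVec]
  refine continuous_finset_sum _ fun i _ => (continuous_apply i).mul ?_
  exact continuous_finset_sum _ fun j _ => continuous_const.mul (continuous_apply j)

lemma quad_smul {n : ℕ} (M : Matrix (Fin n) (Fin n) ℝ) (c : ℝ) (x : Fin n → ℝ) :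
    (c • x) ⬝ᵥ M *ᵥ (c • x) = c ^ 2 * (x ⬝ᵥ M *ᵥ x) := by
  rw [Matrix.mulVec_smul, smul_dotProduct, dotProduct_smul]
  simp [smul_eq_mul]; ring

lemma exists_kappa_big {n : ℕ} (hn : 0 < n) (A J2 J4 : Matrix (Fin n) (Fin n) ℝ)
    (hJ4nsd : ∀ x : Fin n → ℝ, x ⬝ᵥ J4 *ᵥ x ≤ 0)
    (κbar : ℝ) (hκpos : 0 < κbar)
    (hneg : ∀ x : Fin n → ℝ, x ≠ 0 → x ⬝ᵥ (J2 + κbar ^ 2 • J4) *ᵥ x < 0)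
    (κ₀ : ℝ) :
    ∃ κ : ℝ, κ₀ < κ ∧ ∀ x : Fin n → ℝ, x ≠ 0 →
      x ⬝ᵥ (A + κ ^ 2 • J2 + κ ^ 4 • J4) *ᵥ x < 0 := by
  haveI : Nonempty (Fin n) := ⟨⟨0, hn⟩⟩
  set K := J2 + κbar ^ 2 • J4 with hK
  set S := Metric.sphere (0 : Fin n → ℝ) 1 with hS
  have hSne : S.Nonempty := by
    refine ⟨fun _ => 1, ?_⟩
    simp [hS, pi_norm_const]
  have hScpt : IsCompact S := isCompact_sphere _ _
  obtain ⟨uK, huKS, huK⟩ := hScpt.exists_isMaxOn hSne (quad_continuous K).continuousOn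
  obtain ⟨uA, huAS, huA⟩ := hScpt.exists_isMaxOn hSne (quad_continuous A).continuousOn
  set MA := uA ⬝ᵥ A *ᵥ uA with hMA
  set c := -(uK ⬝ᵥ K *ᵥ uK) with hc
  have hcpos : 0 < c := by
    have huKne : uK ≠ 0 := by
      intro h
      rw [hS, Metric.mem_sphere, dist_zero_right, h, norm_zero] at huKS
      norm_num at huKS
    have := hneg uK huKne
    rw [hc]; linarith
  set T := Real.sqrt ((|MA| + 1) / c) with hT
  set κ := max κbar (max (κ₀ + 1) (T + 1)) with hκ
  have hκ1 : κbar ≤ κ := le_max_left _ _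
  have hκ2 : κ₀ < κ := lt_of_lt_of_le (by linarith) ((le_max_left _ _).trans (le_max_right _ _))
  have hκT : T < κ := lt_of_lt_of_le (by linarith) ((le_max_right _ _).trans (le_max_right _ _))
  have hκpos' : 0 < κ := lt_of_lt_of_le hκpos hκ1
  have hκsq : |MA| + 1 < κ ^ 2 * c := by
    have hTnn : 0 ≤ T := Real.sqrt_nonneg _
    have h1 : T ^ 2 < κ ^ 2 := by nlinarith
    have h2 : T ^ 2 = (|MA| + 1) / c := Real.sq_sqrt (by positivity)
    rw [h2] at h1
    calc |MA| + 1 = (|MA| + 1) / c * c := by field_simp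
    _ < κ ^ 2 * c := by exact mul_lt_mul_of_pos_right h1 hcpos
  refine ⟨κ, hκ2, ?_⟩
  have key : ∀ u ∈ S, u ⬝ᵥ (A + κ ^ 2 • J2 + κ ^ 4 • J4) *ᵥ u < 0 := by
    intro u huS
    have hqA : u ⬝ᵥ A *ᵥ u ≤ |MA| := (huA huS).trans (le_abs_self _)
    have hqK : u ⬝ᵥ K *ᵥ u ≤ -c := by
      have h5 : u ⬝ᵥ K *ᵥ u ≤ uK ⬝ᵥ K *ᵥ uK := huK huS
      rw [hc]; linarith
    have hqJ4 : u ⬝ᵥ J4 *ᵥ u ≤ 0 := hJ4nsd u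
    have expand : u ⬝ᵥ (A + κ ^ 2 • J2 + κ ^ 4 • J4) *ᵥ u
        = u ⬝ᵥ A *ᵥ u + κ ^ 2 * (u ⬝ᵥ K *ᵥ u) + (κ ^ 4 - κ ^ 2 * κbar ^ 2) * (u ⬝ᵥ J4 *ᵥ u) := by
      simp only [hK, Matrix.add_mulVec, Matrix.smul_mulVec, dotProduct_add,
        dotProduct_smul, smul_eq_mul]
      ring
    rw [expand]
    have hbk : κbar ^ 2 ≤ κ ^ 2 := by nlinarith
    have hfac : 0 ≤ κ ^ 4 - κ ^ 2 * κbar ^ 2 := by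
      nlinarith [mul_nonneg (sq_nonneg κ) (sub_nonneg.mpr hbk)]
    have h3 : (κ ^ 4 - κ ^ 2 * κbar ^ 2) * (u ⬝ᵥ J4 *ᵥ u) ≤ 0 :=
      mul_nonpos_of_nonneg_of_nonpos hfac hqJ4
    have h4 : κ ^ 2 * (u ⬝ᵥ K *ᵥ u) ≤ κ ^ 2 * (-c) :=
      mul_le_mul_of_nonneg_left hqK (by positivity)
    nlinarith
  intro x hx
  have hxn : 0 < ‖x‖ := norm_pos_iff.mpr hx
  set u := ‖x‖⁻¹ • x with hu
  have huS : u ∈ S := by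
    rw [hS, Metric.mem_sphere, dist_zero_right, hu, norm_smul]
    simp [abs_of_pos (inv_pos.mpr hxn), inv_mul_cancel₀ (ne_of_gt hxn)]
  have hxu : x = ‖x‖ • u := by
    rw [hu, smul_smul, mul_inv_cancel₀ (ne_of_gt hxn), one_smul]
  rw [hxu, quad_smul]
  exact mul_neg_of_pos_of_neg (pow_pos hxn 2) (key u huS)

lemma dd_identity {R : Type*} [CommRing R] (N : ℕ) (a : ℕ → R) (z w : R) :
    (∑ i ∈ Finset.range N, a i * z ^ i) - (∑ i ∈ Finset.range N, a i * w ^ i)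
    = (z - w) * ∑ i ∈ Finset.range N, a i * ∑ j ∈ Finset.range i, z ^ j * w ^ (i - 1 - j) := by
  rw [← Finset.sum_sub_distrib, Finset.mul_sum]
  refine Finset.sum_congr rfl fun i _ => ?_
  have h := geom_sum₂_mul z w i
  calc a i * z ^ i - a i * w ^ i = a i * (z ^ i - w ^ i) := by ring
  _ = a i * ((∑ j ∈ Finset.range i, z ^ j * w ^ (i - 1 - j)) * (z - w)) := by rw [h]
  _ = (z - w) * (a i * ∑ j ∈ Finset.range i, z ^ j * w ^ (i - 1 - j)) := by ring

lemma dd_at_zero {R : Type*} [CommRing R] (i : ℕ) :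
    (∑ j ∈ Finset.range i, (0 : R) ^ j * (0 : R) ^ (i - 1 - j)) = if i = 1 then 1 else 0 := by
  match i with
  | 0 => simp
  | 1 => simp
  | (k + 2) =>
    rw [if_neg (by omega)]
    refine Finset.sum_eq_zero fun j hj => ?_
    rcases Nat.eq_zero_or_pos j with h | h
    · subst h
      have e : k + 2 - 1 - 0 = k + 1 := by omega
      rw [e, zero_pow k.succ_ne_zero, mul_zero]
    · rw [zero_pow h.ne', zero_mul]

lemma coeff_of_rootMult (P : Polynomial ℝ) (hP : P.Monic)
    (h : (P.map (algebraMap ℝ ℂ)).rootMultiplicity 0 = 1) :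
    P.coeff 0 = 0 ∧ P.coeff 1 ≠ 0 := by
  set pm := P.map (algebraMap ℝ ℂ) with hpm
  have hpm0 : pm ≠ 0 := (hP.map _).ne_zero
  have h1 : (X : Polynomial ℂ) ∣ pm := by
    have := (Polynomial.le_rootMultiplicity_iff hpm0 (a := 0) (n := 1)).mp (by omega)
    simpa using this
  have hc0 : pm.coeff 0 = 0 := Polynomial.X_dvd_iff.mp h1
  have h2 : ¬ ((X : Polynomial ℂ) ^ 2 ∣ pm) := by
    intro hdvd
    have : 2 ≤ pm.rootMultiplicity 0 := by
      rw [Polynomial.le_rootMultiplicity_iff hpm0]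
      simpa using hdvd
    omega
  have hc1 : pm.coeff 1 ≠ 0 := by
    intro hc1
    exact h2 (Polynomial.X_pow_dvd_iff.mpr fun d hd => by
      interval_cases d
      · exact hc0
      · exact hc1)
  constructor
  · have := hc0
    rw [hpm, Polynomial.coeff_map] at this
    exact Complex.ofReal_eq_zero.mp this
  · intro hc
    apply hc1
    rw [hpm, Polynomial.coeff_map, hc]
    simp

lemma small_kappa (hn : 0 < n) (J : ℝ → Matrix (Fin n) (Fin n) ℝ)
    (hJcont : Continuous J)
    (hroot0 : (((J 0).charpoly).map (algebraMap ℝ ℂ)).rootMultiplicity 0 = 1)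
    (hneg0 : ∀ z : ℂ, (((J 0).charpoly).map (algebraMap ℝ ℂ)).IsRoot z → z ≠ 0 → z.re < 0)
    (κ₀ : ℝ) (hκ₀ : 0 < κ₀)
    (hdet : ∀ κ : ℝ, 0 < κ → κ < κ₀ → 0 < (-(J κ)).det) :
    ∃ κhat : ℝ, 0 < κhat ∧ ∀ κ : ℝ, 0 < κ → κ < κhat →
      ∀ μ : ℂ, (((J κ).charpoly).map (algebraMap ℝ ℂ)).IsRoot μ → μ.re < 0 := by
  classical
  set a : ℕ → ℝ → ℝ := fun i κ => ((J κ).charpoly).coeff i with ha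
  have hacont : ∀ i, Continuous (a i) := fun i => coeff_charpoly_continuous hJcont i
  have hnd : ∀ κ, ((J κ).charpoly).natDegree < n + 1 := by
    intro κ
    rw [Matrix.charpoly_natDegree_eq_dim]
    simp
  set pC : ℝ → ℂ → ℂ := fun κ z => ∑ i ∈ Finset.range (n+1), (a i κ : ℂ) * z ^ i with hpC
  have hrepC : ∀ κ z, (((J κ).charpoly).map (algebraMap ℝ ℂ)).eval z = pC κ z := by
    intro κ z
    have hnd' : (((J κ).charpoly).map (algebraMap ℝ ℂ)).natDegree < n + 1 :=
      lt_of_le_of_lt Polynomial.natDegree_map_le (hnd κ)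
    rw [Polynomial.eval_eq_sum_range' hnd']
    refine Finset.sum_congr rfl fun i _ => ?_
    rw [Polynomial.coeff_map]
    rfl
  have hrepR : ∀ κ t, ((J κ).charpoly).eval t = ∑ i ∈ Finset.range (n+1), a i κ * t ^ i := by
    intro κ t
    exact Polynomial.eval_eq_sum_range' (hnd κ) t
  have hpCcont : Continuous fun q : ℝ × ℂ => pC q.1 q.2 := by
    refine continuous_finset_sum _ fun i _ => ?_
    exact (Complex.continuous_ofReal.comp ((hacont i).comp continuous_fst)).mul
      (continuous_snd.pow i)
  have hconj : ∀ κ z, pC κ ((starRingEnd ℂ) z) = (starRingEnd ℂ) (pC κ z) := by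
    intro κ z
    rw [map_sum]
    refine Finset.sum_congr rfl fun i _ => ?_
    rw [_root_.map_mul, _root_.map_pow, Complex.conj_ofReal]
  -- bound on roots for κ ∈ [0,1]
  set g : ℝ → ℝ := fun κ => ∑ i, ∑ j, |J κ i j| with hg
  have hgcont : Continuous g := by
    refine continuous_finset_sum _ fun i _ => continuous_finset_sum _ fun j _ => ?_
    exact ((continuous_apply j).comp ((continuous_apply i).comp hJcont)).abs
  obtain ⟨κm, -, hκm⟩ := (isCompact_Icc (a := (0:ℝ)) (b := 1)).exists_isMaxOn
    ⟨0, by norm_num⟩ hgcont.continuousOn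
  set R : ℝ := max (g κm) 1 with hR
  have hRpos : 0 < R := lt_of_lt_of_le one_pos (le_max_right _ _)
  have hroots_bdd : ∀ κ, 0 ≤ κ → κ ≤ 1 → ∀ z : ℂ, pC κ z = 0 → ‖z‖ ≤ R := by
    intro κ h0 h1 z hz
    have hzr : (((J κ).charpoly).map (algebraMap ℝ ℂ)).IsRoot z := by
      rw [Polynomial.IsRoot, hrepC]; exact hz
    calc ‖z‖ ≤ g κ := eigen_abs_le _ _ hzr hn
    _ ≤ g κm := hκm ⟨h0, h1⟩
    _ ≤ R := le_max_left _ _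
  -- Lemma D
  have hD : ∀ ε' : ℝ, 0 < ε' → ∃ δ : ℝ, 0 < δ ∧ ∀ κ, 0 ≤ κ → κ ≤ δ →
      ∀ z : ℂ, pC κ z = 0 → 0 ≤ z.re → ‖z‖ < ε' := by
    intro ε' hε'
    by_contra hcon
    push_neg at hcon
    have hstep : ∀ k : ℕ, ∃ κ : ℝ, (0 ≤ κ ∧ κ ≤ min 1 (1/(k+1 : ℝ))) ∧
        ∃ z : ℂ, pC κ z = 0 ∧ 0 ≤ z.re ∧ ε' ≤ ‖z‖ := by
      intro k
      obtain ⟨κ, h0, h1, z, hz, hre, habs⟩ := hcon (min 1 (1/(k+1 : ℝ)))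
        (lt_min one_pos (by positivity))
      exact ⟨κ, ⟨h0, h1⟩, z, hz, hre, habs⟩
    choose κs hκs zs hzs hres habss using hstep
    set K : Set ℂ := Metric.closedBall 0 R ∩ {z | ε' ≤ ‖z‖ ∧ 0 ≤ z.re} with hK
    have hKcpt : IsCompact K := by
      refine (isCompact_closedBall 0 R).inter_right ?_
      exact (isClosed_le continuous_const continuous_norm).inter
        (isClosed_le continuous_const Complex.continuous_re)
    have hmem : ∀ k, zs k ∈ K := by
      intro k
      refine ⟨?_, habss k, hres k⟩
      have := hroots_bdd (κs k) (hκs k).1 ((hκs k).2.trans (min_le_left _ _)) (zs k) (hzs k)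
      simpa [Metric.mem_closedBall, dist_zero_right] using this
    obtain ⟨zlim, hzlimK, φ, hφ, hzt⟩ := hKcpt.tendsto_subseq hmem
    have hκt : Filter.Tendsto (fun k => κs (φ k)) Filter.atTop (nhds 0) := by
      refine tendsto_of_tendsto_of_tendsto_of_le_of_le tendsto_const_nhds
        tendsto_one_div_add_atTop_nhds_zero_nat (fun k => (hκs (φ k)).1) (fun k => ?_)
      calc κs (φ k) ≤ min 1 (1/((φ k : ℝ)+1)) := (hκs (φ k)).2
      _ ≤ 1/((φ k : ℝ)+1) := min_le_right _ _
      _ ≤ 1/((k : ℝ)+1) := by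
          apply one_div_le_one_div_of_le (by positivity)
          have hk : (k : ℝ) ≤ (φ k : ℝ) := by exact_mod_cast hφ.le_apply
          linarith
    have htends : Filter.Tendsto (fun k => pC (κs (φ k)) (zs (φ k))) Filter.atTop
        (nhds (pC 0 zlim)) := by
      have := (hpCcont.tendsto (0, zlim)).comp (hκt.prodMk_nhds hzt)
      exact this
    have hlim : pC 0 zlim = 0 := by
      have h0 : Filter.Tendsto (fun k => pC (κs (φ k)) (zs (φ k))) Filter.atTop (nhds 0) := by
        simp only [fun k => hzs (φ k)]
        exact tendsto_const_nhds
      exact tendsto_nhds_unique htends h0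
    have hzlimne : zlim ≠ 0 := by
      intro h
      rw [h] at hzlimK
      have := hzlimK.2.1
      simp at this
      linarith
    have : zlim.re < 0 := by
      apply hneg0 zlim _ hzlimne
      rw [Polynomial.IsRoot, hrepC]
      exact hlim
    have h2 : 0 ≤ zlim.re := hzlimK.2.2
    linarith
  -- Lemma H
  set hC : ℝ → ℂ → ℂ → ℂ := fun κ z w =>
    ∑ i ∈ Finset.range (n+1), (a i κ : ℂ) * ∑ j ∈ Finset.range i, z ^ j * w ^ (i-1-j) with hhC
  have hCdiff : ∀ κ z w, pC κ z - pC κ w = (z - w) * hC κ z w := by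
    intro κ z w
    exact dd_identity (n+1) (fun i => (a i κ : ℂ)) z w
  have hCcont : Continuous fun q : ℝ × ℂ × ℂ => hC q.1 q.2.1 q.2.2 := by
    refine continuous_finset_sum _ fun i _ => ?_
    refine (Complex.continuous_ofReal.comp ((hacont i).comp continuous_fst)).mul ?_
    refine continuous_finset_sum _ fun j _ => ?_
    exact ((continuous_fst.comp continuous_snd).pow j).mul
      ((continuous_snd.comp continuous_snd).pow (i-1-j))
  have hC000 : hC 0 0 0 = (a 1 0 : ℂ) := by
    rw [hhC]
    simp only []
    rw [Finset.sum_congr rfl (fun i _ => by rw [dd_at_zero i])]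
    rw [Finset.sum_eq_single 1]
    · simp
    · intro i _ hi
      rw [if_neg hi, mul_zero]
    · intro h
      exact absurd (Finset.mem_range.mpr (by omega)) h
  have ha10 : a 1 0 ≠ 0 := by
    have := coeff_of_rootMult ((J 0).charpoly) ((J 0).charpoly_monic) hroot0
    exact this.2
  have hCne : hC 0 0 0 ≠ 0 := by
    rw [hC000]
    exact_mod_cast ha10
  obtain ⟨r, hrpos, hrball⟩ := Metric.eventually_nhds_iff.mp
    ((hCcont.continuousAt (x := ((0:ℝ), (0:ℂ), (0:ℂ)))).eventually_ne hCne)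
  set ε : ℝ := r/2 with hε
  have hεpos : 0 < ε := by positivity
  have hHne : ∀ κ : ℝ, ∀ z w : ℂ, |κ| ≤ ε → ‖z‖ ≤ ε → ‖w‖ ≤ ε →
      hC κ z w ≠ 0 := by
    intro κ z w h1 h2 h3
    refine hrball (y := (κ, z, w)) ?_
    rw [Prod.dist_eq, Prod.dist_eq]
    simp only [dist_zero_right, Real.norm_eq_abs]
    have : max (|κ|) (max (‖z‖) (‖w‖)) ≤ ε := by
      exact max_le h1 (max_le h2 h3)
    calc max (|κ|) (max (‖z‖) (‖w‖)) ≤ ε := this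
    _ < r := by rw [hε]; linarith
  obtain ⟨δ2, hδ2pos, hδ2⟩ := hD ε hεpos
  refine ⟨min (min ε δ2) (min κ₀ 1), by positivity, ?_⟩
  intro κ hκpos hκlt μ hμroot
  by_contra hre
  push_neg at hre
  have hκε : κ ≤ ε := le_of_lt (lt_of_lt_of_le hκlt ((min_le_left _ _).trans (min_le_left _ _)))
  have hκδ2 : κ ≤ δ2 := le_of_lt (lt_of_lt_of_le hκlt ((min_le_left _ _).trans (min_le_right _ _)))
  have hκκ₀ : κ < κ₀ := lt_of_lt_of_le hκlt ((min_le_right _ _).trans (min_le_left _ _))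
  have hκabs : |κ| ≤ ε := by rw [abs_of_pos hκpos]; exact hκε
  have hμ0 : pC κ μ = 0 := by rw [← hrepC]; exact hμroot
  have hμabs : ‖μ‖ < ε := hδ2 κ (le_of_lt hκpos) hκδ2 μ hμ0 hre
  have hP0pos : 0 < ((J κ).charpoly).eval 0 := by
    rw [my_eval_charpoly]
    simpa using hdet κ hκpos hκκ₀
  by_cases him : μ.im = 0
  · -- real eigenvalue
    set x : ℝ := μ.re with hx
    have hμx : μ = (x : ℂ) := Complex.ext rfl (by simpa using him)
    have hevalx : ((J κ).charpoly).eval x = 0 := by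
      have h1 : pC κ (x : ℂ) = (( ((J κ).charpoly).eval x : ℝ) : ℂ) := by
        rw [hrepR, hpC]
        push_cast
        rfl
      rw [← hμx] at h1
      rw [hμ0] at h1
      exact_mod_cast h1.symm
    have hxpos : 0 < x := by
      rcases lt_trichotomy x 0 with h | h | h
      · exact absurd hre (by rw [hx] at h; simpa using not_le.mpr h)
      · exfalso; rw [h] at hevalx; linarith
      · exact h
    have hxε : x < ε := by
      have : ‖(x : ℂ)‖ < ε := by rw [← hμx]; exact hμabs
      rwa [Complex.norm_real, Real.norm_eq_abs, abs_of_pos hxpos] at this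
    set gR : ℝ → ℝ := fun y =>
      ∑ i ∈ Finset.range (n+1), a i κ * ∑ j ∈ Finset.range i, y ^ j * x ^ (i-1-j) with hgR
    have hgRcont : Continuous gR := by
      refine continuous_finset_sum _ fun i _ => continuous_const.mul ?_
      exact continuous_finset_sum _ fun j _ => (continuous_pow j).mul continuous_const
    have hgRid : ∀ y : ℝ, ((J κ).charpoly).eval y = (y - x) * gR y := by
      intro y
      have := dd_identity (n+1) (fun i => a i κ) y x
      rw [← hrepR, ← hrepR, hevalx, sub_zero] at this
      exact this
    have hgRne : ∀ y : ℝ, |y| ≤ ε → gR y ≠ 0 := by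
      intro y hy hgy
      have hcast : ((gR y : ℝ) : ℂ) = hC κ (y : ℂ) (x : ℂ) := by
        rw [hgR, hhC]
        push_cast
        rfl
      have := hHne κ (y : ℂ) (x : ℂ) hκabs
        (by rw [Complex.norm_real, Real.norm_eq_abs]; exact hy)
        (by rw [Complex.norm_real, Real.norm_eq_abs, abs_of_pos hxpos]; exact le_of_lt hxε)
      rw [← hcast, hgy] at this
      simp at this
    have hgR0 : gR 0 < 0 := by
      have h1 := hgRid 0
      rw [zero_sub] at h1
      by_contra h
      push_neg at h
      nlinarith
    have hgRε : gR ε < 0 := by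
      rcases lt_trichotomy (gR ε) 0 with h | h | h
      · exact h
      · exact absurd h (hgRne ε (by rw [abs_of_pos hεpos]))
      · exfalso
        have h0ε : (0:ℝ) ≤ ε := le_of_lt hεpos
        have hsub := intermediate_value_Icc h0ε hgRcont.continuousOn
        have : (0:ℝ) ∈ Set.Icc (gR 0) (gR ε) := ⟨le_of_lt hgR0, le_of_lt h⟩
        obtain ⟨y, hy, hgy⟩ := hsub this
        exact hgRne y (by rw [abs_of_nonneg hy.1]; exact hy.2) hgy
    have hPε : ((J κ).charpoly).eval ε < 0 := by
      rw [hgRid ε]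
      exact mul_neg_of_pos_of_neg (by linarith) hgRε
    have htt : Filter.Tendsto (fun t => ((J κ).charpoly).eval t) Filter.atTop Filter.atTop := by
      apply Polynomial.tendsto_atTop_of_leadingCoeff_nonneg
      · rw [Matrix.charpoly_degree_eq_dim]
        simp only [Fintype.card_fin]
        exact_mod_cast hn
      · rw [(Matrix.charpoly_monic _).leadingCoeff]
        norm_num
    obtain ⟨b, hb1, hb2⟩ := ((htt.eventually_gt_atTop 0).and
      (Filter.eventually_ge_atTop (ε+1))).exists
    have hεb : ε ≤ b := by linarith
    have hsub := intermediate_value_Ioo (f := fun t => ((J κ).charpoly).eval t) hεb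
      (((J κ).charpoly).continuous).continuousOn
    have h0mem : (0:ℝ) ∈ Set.Ioo (((J κ).charpoly).eval ε) (((J κ).charpoly).eval b) :=
      ⟨hPε, hb1⟩
    obtain ⟨y, hy, hgy⟩ := hsub h0mem
    have hyroot : pC κ (y : ℂ) = 0 := by
      have h1 : pC κ (y : ℂ) = (( ((J κ).charpoly).eval y : ℝ) : ℂ) := by
        rw [hrepR, hpC]
        push_cast
        rfl
      have hgy' : ((J κ).charpoly).eval y = 0 := hgy
      rw [h1, hgy']
      norm_num
    have := hδ2 κ (le_of_lt hκpos) hκδ2 (y : ℂ) hyroot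
      (by simp; linarith [hy.1, hεpos])
    rw [Complex.norm_real, Real.norm_eq_abs, abs_of_pos (by linarith [hy.1, hεpos])] at this
    linarith [hy.1]
  · -- complex eigenvalue
    set w : ℂ := (starRingEnd ℂ) μ with hw
    have hw0 : pC κ w = 0 := by
      rw [hw, hconj, hμ0, map_zero]
    have hwabs : ‖w‖ < ε := by
      rw [hw, Complex.norm_conj]; exact hμabs
    have hμw : μ - w ≠ 0 := by
      rw [sub_ne_zero, hw]
      intro h
      exact him (Complex.conj_eq_iff_im.mp h.symm)
    have hCne' : hC κ μ w ≠ 0 := hHne κ μ w hκabs (le_of_lt hμabs) (le_of_lt hwabs)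
    have : pC κ μ - pC κ w = (μ - w) * hC κ μ w := hCdiff κ μ w
    rw [hμ0, hw0, sub_zero] at this
    exact (mul_ne_zero hμw hCne') this.symm


lemma some_eig_pos {n : ℕ} (hn : 0 < n) (M : Matrix (Fin n) (Fin n) ℝ)
    (hdet : (-M).det < 0) : SomeEigPosRe M := by
  have h0 : M.charpoly.eval 0 = (-M).det := by
    rw [my_eval_charpoly]
    norm_num
  have htt : Filter.Tendsto (fun t => M.charpoly.eval t) Filter.atTop Filter.atTop := by
    apply Polynomial.tendsto_atTop_of_leadingCoeff_nonneg
    · rw [Matrix.charpoly_degree_eq_dim, Fintype.card_fin]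
      exact_mod_cast hn
    · rw [(Matrix.charpoly_monic _).leadingCoeff]
      norm_num
  obtain ⟨b, hb1, hb2⟩ := ((htt.eventually_gt_atTop 0).and
    (Filter.eventually_ge_atTop 1)).exists
  have h0b : (0:ℝ) ≤ b := by linarith
  have hsub := intermediate_value_Ioo (f := fun t => M.charpoly.eval t) h0b
    (M.charpoly.continuous).continuousOn
  have h0mem : (0:ℝ) ∈ Set.Ioo (M.charpoly.eval 0) (M.charpoly.eval b) := by
    constructor
    · rw [h0]; exact hdet
    · exact hb1
  obtain ⟨x, hx, hgx⟩ := hsub h0mem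
  have hgx' : M.charpoly.eval x = 0 := hgx
  refine ⟨(x : ℂ), ?_, by simpa using hx.1⟩
  show Polynomial.eval _ _ = 0
  rw [show ((x : ℝ) : ℂ) = algebraMap ℝ ℂ x from rfl, Polynomial.eval_map,
    Polynomial.eval₂_at_apply, hgx', map_zero]

lemma all_eig_neg_of_quad {n : ℕ} (M : Matrix (Fin n) (Fin n) ℝ)
    (hq : ∀ x : Fin n → ℝ, x ≠ 0 → x ⬝ᵥ M *ᵥ x < 0) : AllEigNegRe M := by
  intro μ h
  obtain ⟨v, hv0, hv⟩ := exists_eigenvector M μ h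
  have heq := eigen_re_eq M μ v hv
  set x : Fin n → ℝ := fun i => (v i).re with hx
  set y : Fin n → ℝ := fun i => (v i).im with hy
  have hq0 : ∀ z : Fin n → ℝ, z ⬝ᵥ M *ᵥ z ≤ 0 ∧ (z ≠ 0 → z ⬝ᵥ M *ᵥ z < 0) := by
    intro z
    by_cases hz : z = 0
    · subst hz
      constructor
      · simp [zero_dotProduct]
      · intro h'; exact absurd rfl h'
    · exact ⟨le_of_lt (hq z hz), fun _ => hq z hz⟩
  have hxyne : x ≠ 0 ∨ y ≠ 0 := by
    by_contra hcon
    push_neg at hcon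
    apply hv0
    funext i
    have h1 : (v i).re = 0 := congrFun hcon.1 i
    have h2 : (v i).im = 0 := congrFun hcon.2 i
    exact Complex.ext h1 h2
  have hQneg : x ⬝ᵥ M *ᵥ x + y ⬝ᵥ M *ᵥ y < 0 := by
    rcases hxyne with h' | h'
    · have := (hq0 x).2 h'
      have h2 := (hq0 y).1
      linarith
    · have := (hq0 y).2 h'
      have h2 := (hq0 x).1
      linarith
  have hSpos : 0 < ∑ i, ((v i).re ^ 2 + (v i).im ^ 2) := by
    obtain ⟨i, hi⟩ := Function.ne_iff.mp hv0
    refine Finset.sum_pos' (fun j _ => by positivity) ⟨i, Finset.mem_univ i, ?_⟩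
    have : (0:ℝ) < Complex.normSq (v i) := Complex.normSq_pos.mpr hi
    rw [Complex.normSq_apply] at this
    nlinarith
  rw [heq] at hQneg
  by_contra hre
  push_neg at hre
  exact absurd hQneg (not_lt.mpr (mul_nonneg hre (le_of_lt hSpos)))

end AuxLemmas


/-- (Theorem 2, sufficient condition, `Ψ⁺` branch) Under the structural assumptions on
`J₂, J₄` and on the spectrum of `B ⬝ diag(Δ) ⬝ C` for all `Δ ∈ 𝒟`, if for some
`Δ* ∈ 𝒟` the function `κ ↦ det (-J(Δ*,κ))` is initially positive and there is
`κ₂ > 0` with `det (-J(Δ,κ₂)) < 0` for all `Δ ∈ 𝒟`, then `Δ*` exhibits microphase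
separation. -/
theorem stmt11 (n m : ℕ) (B : Matrix (Fin n) (Fin m) ℝ) (C : Matrix (Fin m) (Fin n) ℝ)
    (Δlo Δhi : Fin m → ℝ) (hbounds : ∀ j, 0 ≤ Δlo j ∧ Δlo j ≤ Δhi j)
    (J2 J4 : Matrix (Fin n) (Fin n) ℝ) (hJ2 : J2.IsSymm) (hJ4 : J4.IsSymm)
    (hJ4nsd : ∀ x : Fin n → ℝ, x ⬝ᵥ J4.mulVec x ≤ 0)
    (hκbar : ∃ κbar : ℝ, 0 < κbar ∧
      ∀ x : Fin n → ℝ, x ≠ 0 → x ⬝ᵥ (J2 + κbar ^ 2 • J4).mulVec x < 0)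
    (hspec : ∀ Δ : Fin m → ℝ, (∀ j, Δlo j ≤ Δ j ∧ Δ j ≤ Δhi j) →
      (((B * Matrix.diagonal Δ * C).charpoly).map (algebraMap ℝ ℂ)).rootMultiplicity 0 = 1 ∧
      (∀ z : ℂ, (((B * Matrix.diagonal Δ * C).charpoly).map (algebraMap ℝ ℂ)).IsRoot z →
        z ≠ 0 → z.re < 0))
    (Δstar : Fin m → ℝ) (hΔstar : ∀ j, Δlo j ≤ Δstar j ∧ Δstar j ≤ Δhi j)
    (hInitPos : ∃ κhat : ℝ, 0 < κhat ∧ ∀ κ : ℝ, 0 < κ → κ < κhat →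
      0 < (-(Jmat B C J2 J4 Δstar κ)).det)
    (hPsiPlusNeg : ∃ κ2 : ℝ, 0 < κ2 ∧ ∀ Δ : Fin m → ℝ,
      (∀ j, Δlo j ≤ Δ j ∧ Δ j ≤ Δhi j) → (-(Jmat B C J2 J4 Δ κ2)).det < 0) :
    Microphase B C J2 J4 Δstar := by
  classical
  obtain ⟨hroot0, hneg0⟩ := hspec Δstar hΔstar
  -- n is positive
  have hn : 0 < n := by
    by_contra hn0
    push_neg at hn0
    interval_cases n
    have hnd : (B * Matrix.diagonal Δstar * C).charpoly.natDegree = 0 :=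
      Matrix.charpoly_natDegree_eq_dim _
    have h1 : (B * Matrix.diagonal Δstar * C).charpoly = 1 :=
      (Polynomial.Monic.natDegree_eq_zero (Matrix.charpoly_monic _)).mp hnd
    rw [h1, Polynomial.map_one] at hroot0
    rw [Polynomial.rootMultiplicity_eq_zero (by simp [Polynomial.IsRoot])] at hroot0
    exact absurd hroot0 (by norm_num)
  set A : Matrix (Fin n) (Fin n) ℝ := B * Matrix.diagonal Δstar * C with hA
  set Jf : ℝ → Matrix (Fin n) (Fin n) ℝ := fun κ => Jmat B C J2 J4 Δstar κ with hJf
  have hJf0 : Jf 0 = A := by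
    rw [hJf, hA]
    simp [Jmat]
  have hJfcont : Continuous Jf := by
    apply continuous_pi
    intro i
    apply continuous_pi
    intro j
    have : (fun κ => Jf κ i j)
        = fun κ => A i j + κ ^ 2 * J2 i j + κ ^ 4 * J4 i j := by
      funext κ
      rw [hJf]
      simp [Jmat, Matrix.add_apply, Matrix.smul_apply, hA, smul_eq_mul]
    rw [this]
    exact (continuous_const.add ((continuous_pow 2).mul continuous_const)).add
      ((continuous_pow 4).mul continuous_const)
  obtain ⟨κ₀, hκ₀pos, hdet0⟩ := hInitPos
  obtain ⟨κ1, hκ1pos, hdetneg⟩ := hPsiPlusNeg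
  obtain ⟨κbar, hκbarpos, hκbarneg⟩ := hκbar
  -- small κ regime
  obtain ⟨κh, hκhpos, hκh⟩ := small_kappa hn Jf hJfcont
    (by rw [hJf0]; exact hroot0) (by rw [hJf0]; exact hneg0) κ₀ hκ₀pos hdet0
  -- large κ regime
  obtain ⟨κbig, hκbig1, hκbigneg⟩ := exists_kappa_big hn A J2 J4 hJ4nsd κbar hκbarpos
    hκbarneg κ1
  refine ⟨min κh (κ1/2), κ1, κbig, ?_, ?_, hκbig1, ?_, ?_, ?_⟩
  · positivity
  · calc min κh (κ1/2) ≤ κ1/2 := min_le_right _ _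
    _ < κ1 := by linarith
  · intro κ hκpos hκlt
    intro μ hμ
    exact hκh κ hκpos (lt_of_lt_of_le hκlt (min_le_left _ _)) μ hμ
  · exact some_eig_pos hn _ (hdetneg Δstar hΔstar)
  · apply all_eig_neg_of_quad
    intro x hx
    have : Jmat B C J2 J4 Δstar κbig = A + κbig ^ 2 • J2 + κbig ^ 4 • J4 := rfl
    rw [this]
    exact hκbigneg x hx
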